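/- Let A be an associative unital ℂ-algebra that is a prime ring, meaning that for all a, b ∈ A, if a·x·b = 0 for every x ∈ A then a = 0 or b = 0. Let Z denote the center of A, and assume that A is finitely generated as a Z-module and that Z is an integral domain which is integrally closed in its field of fractions. Then the inclusion Z ↪ A splits as a map of Z-modules: there exists a Z-linear map π : A → Z with π(z) = z for all z ∈ Z; in particular Z is a direct summand of A as a Z-module. -/

import Mathlib

open Polynomial Matrix in
lemma aux_root_int {Z K : Type*} [CommRing Z] [Field K] [Algebra Z K]
    {n : ℕ} (M : Matrix (Fin n) (Fin n) K)
    {p : Polynomial Z} (hp : p.Monic) (hM : Polynomial.aeval M (p.map (algebraMap Z K)) = 0)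
    (L : Type*) [Field L] [Algebra K L] [Algebra Z L] [IsScalarTower Z K L]
    {μ : L} (hμ : μ ∈ ((M.map (algebraMap K L)).charpoly).roots) : IsIntegral Z μ := by
  set N := M.map (algebraMap K L) with hN
  have hroot : (N.charpoly).IsRoot μ := isRoot_of_mem_roots hμ
  have hdet : (μ • (1 : Matrix (Fin n) (Fin n) L) - N).det = 0 := by
    have h1 : (μ • (1 : Matrix (Fin n) (Fin n) L) - N)
        = (evalRingHom μ).mapMatrix (charmatrix N) := by
      ext i j
      by_cases h : i = j
      · subst h; simp [charmatrix_apply_eq]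
      · simp [charmatrix_apply_ne _ _ _ h, Matrix.one_apply_ne h, h]
    rw [h1, ← RingHom.map_det]
    exact hroot
  obtain ⟨v, hv0, hv⟩ := Matrix.exists_mulVec_eq_zero_iff.mpr hdet
  have heig : N.mulVec v = μ • v := by
    rw [sub_mulVec, sub_eq_zero] at hv
    rw [← hv, smul_mulVec, one_mulVec]
  set g : Module.End L (Fin n → L) := Matrix.toLinAlgEquiv' N with hg
  have hgev : g.HasEigenvector μ v :=
    ⟨Module.End.mem_eigenspace_iff.mpr
      (by rw [hg]; rw [Matrix.toLinAlgEquiv'_apply]; exact heig), hv0⟩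
  have hNae : Polynomial.aeval N (p.map (algebraMap Z L)) = 0 := by
    have h1 : p.map (algebraMap Z L) = (p.map (algebraMap Z K)).map (algebraMap K L) := by
      rw [Polynomial.map_map, ← IsScalarTower.algebraMap_eq]
    rw [h1, Polynomial.aeval_map_algebraMap]
    have h2 : N = (AlgHom.mapMatrix (Algebra.ofId K L)) M := rfl
    rw [h2, Polynomial.aeval_algHom_apply, hM, map_zero]
  have hgae : Polynomial.aeval g (p.map (algebraMap Z L)) = 0 := by
    have h := Polynomial.aeval_algHom_apply
      (Matrix.toLinAlgEquiv' (R := L) (n := Fin n)).toAlgHom N (p.map (algebraMap Z L))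
    simp only [AlgEquiv.toAlgHom_eq_coe, AlgHom.coe_coe, AlgEquiv.coe_toAlgHom] at h
    rw [hg, h, hNae, map_zero]
  have hev : (p.map (algebraMap Z L)).eval μ = 0 := by
    have h := Module.End.aeval_apply_of_hasEigenvector (p := p.map (algebraMap Z L)) hgev
    rw [hgae] at h
    exact ((smul_eq_zero.mp h.symm).resolve_right hv0)
  exact ⟨p, hp, by rwa [Polynomial.eval_map] at hev⟩

open Polynomial Matrix in
lemma aux_trace_mem {Z : Type*} [CommRing Z] [IsDomain Z] [IsIntegrallyClosed Z]
    {K : Type*} [Field K] [Algebra Z K] [IsFractionRing Z K]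
    {V : Type*} [AddCommGroup V] [Module K V] [FiniteDimensional K V]
    (f : V →ₗ[K] V) {p : Polynomial Z} (hp : p.Monic)
    (hf : Polynomial.aeval f (p.map (algebraMap Z K)) = 0) :
    ∃ z : Z, algebraMap Z K z = LinearMap.trace K V f := by
  classical
  let b := Module.finBasis K V
  set M := LinearMap.toMatrix b b f with hMdef
  have htr : LinearMap.trace K V f = M.trace := LinearMap.trace_eq_matrix_trace K b f
  have hM : Polynomial.aeval M (p.map (algebraMap Z K)) = 0 := by
    have h := Polynomial.aeval_algHom_apply
      (LinearMap.toMatrixAlgEquiv b).toAlgHom f (p.map (algebraMap Z K))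
    simp only [AlgEquiv.toAlgHom_eq_coe, AlgHom.coe_coe, AlgEquiv.coe_toAlgHom] at h
    have : LinearMap.toMatrixAlgEquiv b f = M := rfl
    rw [this] at h
    rw [h, hf, map_zero]
  set L := AlgebraicClosure K
  set N := M.map (algebraMap K L) with hNdef
  have hint : IsIntegral Z (algebraMap K L M.trace) := by
    have h1 : N.trace = algebraMap K L M.trace := by
      simp [hNdef, Matrix.trace, Matrix.diag, map_sum]
    rw [← h1, Matrix.trace_eq_sum_roots_charpoly]
    have : ∀ μ ∈ N.charpoly.roots, μ ∈ integralClosure Z L := fun μ hμ =>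
      aux_root_int M hp hM L hμ
    exact multiset_sum_mem _ this
  have hint2 : IsIntegral Z M.trace :=
    (isIntegral_algebraMap_iff (algebraMap K L).injective).mp hint
  obtain ⟨z, hz⟩ := IsIntegrallyClosed.isIntegral_iff.mp hint2
  exact ⟨z, by rw [hz, htr]⟩

set_option maxHeartbeats 1000000 in
set_option synthInstance.maxHeartbeats 200000 in
open scoped TensorProduct in
lemma aux_main {Z A : Type*} [CommRing Z] [IsDomain Z] [IsIntegrallyClosed Z]
    [Ring A] [Algebra Z A] [Module.Finite Z A]
    (hinj : Function.Injective (algebraMap Z A)) :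
    ∃ (n : ℕ) (π₀ : A →ₗ[Z] Z), n ≠ 0 ∧
      ∀ z : Z, π₀ (algebraMap Z A z) = n • z := by
  classical
  let K := FractionRing Z
  let V := K ⊗[Z] A
  haveI : Module.Finite K V := Module.Finite.base_change Z K A
  let ι : A →ₗ[Z] V := TensorProduct.mk Z K A 1
  let τ : A →ₗ[Z] K :=
    (((LinearMap.trace K V).comp (LinearMap.mul K V)).restrictScalars Z).comp ι
  let Φ : A →ₐ[Z] Module.End K V :=
    ((Algebra.lmul K V).restrictScalars Z).comp (Algebra.TensorProduct.includeRight)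
  have hτΦ : ∀ a : A, τ a = LinearMap.trace K V (Φ a) := fun a => rfl
  let j : Z →ₗ[Z] K := Algebra.linearMap Z K
  have hj : Function.Injective j := IsFractionRing.injective Z K
  have hτmem : ∀ a : A, τ a ∈ LinearMap.range j := by
    intro a
    obtain ⟨p, hp, hpa⟩ := IsIntegral.of_finite Z a
    have key : Polynomial.aeval (Φ a) (p.map (algebraMap Z K)) = 0 := by
      rw [Polynomial.aeval_map_algebraMap, Polynomial.aeval_algHom_apply,
        Polynomial.aeval_def, hpa, map_zero]
    obtain ⟨z, hz⟩ := aux_trace_mem (Φ a) hp key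
    exact ⟨z, by rw [← hτΦ] at hz; exact hz⟩
  let π₀ : A →ₗ[Z] Z :=
    (LinearEquiv.ofInjective j hj).symm.toLinearMap.comp
      (τ.codRestrict (LinearMap.range j) hτmem)
  have hπ₀ : ∀ a : A, algebraMap Z K (π₀ a) = τ a := by
    intro a
    have h1 : (LinearEquiv.ofInjective j hj) (π₀ a) = ⟨τ a, hτmem a⟩ :=
      (LinearEquiv.ofInjective j hj).apply_symm_apply _
    have h2 := congrArg Subtype.val h1
    rwa [LinearEquiv.ofInjective_apply] at h2
  -- value on scalars
  have hτz : ∀ z : Z, τ (algebraMap Z A z) = algebraMap Z K z * (Module.finrank K V : K) := by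
    intro z
    have h1 : ι (algebraMap Z A z) = algebraMap Z K z • (1 : V) := by
      show (1:K) ⊗ₜ[Z] (algebraMap Z A z) = algebraMap Z K z • (1 : V)
      calc (1:K) ⊗ₜ[Z] (algebraMap Z A z) = (1:K) ⊗ₜ[Z] (z • (1:A)) := by
            rw [Algebra.algebraMap_eq_smul_one]
        _ = z • ((1:K) ⊗ₜ[Z] (1:A)) := TensorProduct.tmul_smul z _ _
        _ = (z • (1:K)) ⊗ₜ[Z] (1:A) := by rw [TensorProduct.smul_tmul']
        _ = (algebraMap Z K z) ⊗ₜ[Z] (1:A) := by rw [← Algebra.algebraMap_eq_smul_one]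
        _ = ((algebraMap Z K z) • (1:K)) ⊗ₜ[Z] (1:A) := by rw [smul_eq_mul, mul_one]
        _ = algebraMap Z K z • ((1:K) ⊗ₜ[Z] (1:A)) := by rw [TensorProduct.smul_tmul']
        _ = algebraMap Z K z • (1:V) := by rw [← Algebra.TensorProduct.one_def]
    have h2 : τ (algebraMap Z A z)
        = LinearMap.trace K V ((LinearMap.mul K V) (ι (algebraMap Z A z))) := rfl
    have h3 : (LinearMap.mul K V) (1 : V) = LinearMap.id := by
      apply LinearMap.ext; intro x
      rw [LinearMap.mul_apply', one_mul, LinearMap.id_apply]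
    rw [h2, h1, map_smul, map_smul, h3, LinearMap.trace_id, smul_eq_mul]
  have hπ₀z : ∀ z : Z, π₀ (algebraMap Z A z) = (Module.finrank K V) • z := by
    intro z
    apply hj
    have e1 : j (π₀ (algebraMap Z A z)) = algebraMap Z K (π₀ (algebraMap Z A z)) := rfl
    have e2 : j ((Module.finrank K V) • z) = algebraMap Z K ((Module.finrank K V) • z) := rfl
    rw [e1, e2, hπ₀, hτz, map_nsmul, nsmul_eq_mul, mul_comm]
  -- nontriviality
  haveI : IsLocalizedModule (nonZeroDivisors Z) ι :=
    (isLocalizedModule_iff_isBaseChange (nonZeroDivisors Z) K ι).mpr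
      (TensorProduct.isBaseChange Z A K)
  have h1V : (1 : V) ≠ 0 := by
    intro h0
    have h0' : ι (1 : A) = 0 := h0
    obtain ⟨s, hs⟩ := (IsLocalizedModule.eq_zero_iff (nonZeroDivisors Z) ι).mp h0'
    have hs' : ((s : Z)) • (1:A) = 0 := hs
    rw [Algebra.smul_def, mul_one] at hs'
    exact nonZeroDivisors.coe_ne_zero s (hinj (by rw [hs', map_zero]))
  haveI : Nontrivial V := nontrivial_of_ne 1 0 h1V
  exact ⟨Module.finrank K V, π₀, Module.finrank_pos.ne', hπ₀z⟩


set_option maxHeartbeats 1000000 in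
set_option synthInstance.maxHeartbeats 1000000 in
/-- Let `A` be an associative unital `ℂ`-algebra which is a prime ring, with center `Z`,
such that `A` is a finite `Z`-module and `Z` is an integrally closed domain.  Then the
inclusion `Z ↪ A` splits as a map of `Z`-modules: there is a `Z`-linear map `π : A → Z`
with `π z = z` for all `z ∈ Z`; in particular `Z` is a direct summand of `A`. -/
theorem center_is_direct_summand_of_prime_integrally_closed
    (A : Type*) [Ring A] [Algebra ℂ A]
    (hprime : ∀ a b : A, (∀ x : A, a * x * b = 0) → a = 0 ∨ b = 0)
    [Module.Finite (Subring.center A) A]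
    [IsDomain (Subring.center A)]
    [IsIntegrallyClosed (Subring.center A)] :
    ∃ π : A →ₗ[Subring.center A] Subring.center A,
      ∀ z : Subring.center A, π (z : A) = z := by
  obtain ⟨n, π₀, hn, hπ₀⟩ := aux_main (Z := Subring.center A) (A := A)
    (fun x y h => Subtype.ext h)
  let χ : ℂ →+* Subring.center A :=
    (algebraMap ℂ A).codRestrict (Subring.center A) fun x =>
      Subring.mem_center_iff.mpr fun g => (Algebra.commutes x g).symm
  let c : Subring.center A := χ ((n : ℂ)⁻¹)
  refine ⟨c • π₀, fun z => ?_⟩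
  have hc : c * (n : Subring.center A) = 1 := by
    have h1 : (n : Subring.center A) = χ (n : ℂ) := by rw [map_natCast]
    rw [h1]
    show χ ((n : ℂ)⁻¹) * χ (n : ℂ) = 1
    rw [← map_mul, inv_mul_cancel₀ (Nat.cast_ne_zero.mpr hn), map_one]
  have h2 : π₀ ((z : A)) = n • z := by
    have h3 : (z : A) = algebraMap (Subring.center A) A z := rfl
    rw [h3, hπ₀]
  rw [LinearMap.smul_apply, h2, smul_eq_mul, nsmul_eq_mul, ← mul_assoc, hc, one_mul]
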